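/- Consider two agents with r̈ = u_i − u_j, h(t) = ‖r(t)‖² − r_s², and the reciprocal assumption u_j = −u_i. If agent i chooses u_i such that 4⟨r, u_i⟩ ≥ −2‖v‖² − 2(γ₁+γ₂)⟨r,v⟩ − γ₁γ₂ h for all t, with h(0) ≥ 0 and ḣ(0) + γ₁ h(0) ≥ 0, then ‖r(t)‖ ≥ r_s for all t ≥ 0. -/

import Mathlib

open scoped RealInnerProductSpace

/-- Grönwall-type lemma: if `f' t + γ f t ≥ 0` on `Ici 0` and `f 0 ≥ 0`,
then `f ≥ 0` on `Ici 0`. -/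
lemma gronwall_nonneg (f f' : ℝ → ℝ) (γ : ℝ)
    (hd : ∀ t, HasDerivAt f (f' t) t)
    (hineq : ∀ t ∈ Set.Ici (0 : ℝ), f' t + γ * f t ≥ 0)
    (h0 : f 0 ≥ 0) : ∀ t ∈ Set.Ici (0 : ℝ), f t ≥ 0 := by
  set g : ℝ → ℝ := fun t => f t * Real.exp (γ * t) with hg
  have hgd : ∀ t, HasDerivAt g ((f' t + γ * f t) * Real.exp (γ * t)) t := by
    intro t
    have h1 : HasDerivAt (fun t : ℝ => Real.exp (γ * t)) (γ * Real.exp (γ * t)) t := by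
      have := (Real.hasDerivAt_exp (γ * t)).comp t ((hasDerivAt_id t).const_mul γ)
      exact this.congr_deriv (by simp only [id_eq, mul_one]; ring)
    have := (hd t).mul h1
    exact this.congr_deriv (by ring)
  have hmono : MonotoneOn g (Set.Ici 0) := by
    apply monotoneOn_of_deriv_nonneg (convex_Ici 0)
      (fun t _ => (hgd t).continuousAt.continuousWithinAt)
      (fun t ht => (hgd t).differentiableAt.differentiableWithinAt)
    intro t ht
    rw [(hgd t).deriv]
    have : (0:ℝ) ≤ t := le_of_lt (by simpa using ht)
    exact mul_nonneg (hineq t this) (Real.exp_nonneg _)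
  intro t ht
  have hle : g 0 ≤ g t := hmono (Set.mem_Ici.mpr (le_refl 0)) ht ht
  simp only [hg] at hle
  have hexp : 0 < Real.exp (γ * t) := Real.exp_pos _
  nlinarith [hle, hexp, Real.exp_pos (γ * (0:ℝ)), h0, mul_nonneg h0 (Real.exp_pos (γ*(0:ℝ))).le]

/-- Reciprocal avoidance: under `u_j = −u_i`, if agent `i` enforces
`4⟪r,u_i⟫ ≥ −2‖v‖² − 2(γ₁+γ₂)⟪r,v⟫ − γ₁γ₂ h` with `h(0) ≥ 0` and
`ḣ(0) + γ₁ h(0) ≥ 0`, then `‖r(t)‖ ≥ r_s` for all `t ≥ 0`. -/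
theorem reciprocal_hocbf_collision_avoidance
    (r v ui uj : ℝ → EuclideanSpace ℝ (Fin 3)) (rs γ₁ γ₂ : ℝ)
    (hγ₁ : 0 < γ₁) (hγ₂ : 0 < γ₂)
    (hr : ∀ t, HasDerivAt r (v t) t)
    (hv : ∀ t, HasDerivAt v (ui t - uj t) t)
    (hrecip : ∀ t, uj t = -ui t)
    (hcont : Continuous ui)
    (hconstraint : ∀ t ∈ Set.Ici (0 : ℝ),
      4 * ⟪r t, ui t⟫ ≥
        -2 * ‖v t‖ ^ 2 - 2 * (γ₁ + γ₂) * ⟪r t, v t⟫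
          - γ₁ * γ₂ * (‖r t‖ ^ 2 - rs ^ 2))
    (h0 : ‖r 0‖ ^ 2 - rs ^ 2 ≥ 0)
    (hψ1 : 2 * ⟪r 0, v 0⟫ + γ₁ * (‖r 0‖ ^ 2 - rs ^ 2) ≥ 0) :
    ∀ t ∈ Set.Ici (0 : ℝ), ‖r t‖ ≥ rs := by
  set h : ℝ → ℝ := fun t => ‖r t‖ ^ 2 - rs ^ 2 with hh
  have hhd : ∀ t, HasDerivAt h (2 * ⟪r t, v t⟫) t := by
    intro t
    have := HasDerivAt.inner ℝ (hr t) (hr t)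
    have h2 : HasDerivAt (fun t => ⟪r t, r t⟫) (2 * ⟪r t, v t⟫) t := by
      exact this.congr_deriv (by rw [real_inner_comm (v t) (r t)]; ring)
    have heq : h = fun s => ⟪r s, r s⟫ - rs ^ 2 := by
      funext s; simp only [hh]; rw [real_inner_self_eq_norm_sq]
    rw [heq]
    exact h2.sub_const _
  set ψ : ℝ → ℝ := fun t => 2 * ⟪r t, v t⟫ + γ₁ * h t with hψ
  have hψd : ∀ t, HasDerivAt ψ
      (2 * (⟪r t, ui t - uj t⟫ + ‖v t‖ ^ 2) + γ₁ * (2 * ⟪r t, v t⟫)) t := by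
    intro t
    have h1 := HasDerivAt.inner ℝ (hr t) (hv t)
    have h2 : HasDerivAt (fun t => 2 * ⟪r t, v t⟫)
        (2 * (⟪r t, ui t - uj t⟫ + ‖v t‖ ^ 2)) t := by
      have := h1.const_mul 2
      exact this.congr_deriv (by rw [real_inner_self_eq_norm_sq])
    exact h2.add ((hhd t).const_mul γ₁)
  -- ψ' + γ₂ ψ ≥ 0 on Ici 0
  have hψineq : ∀ t ∈ Set.Ici (0 : ℝ),
      (2 * (⟪r t, ui t - uj t⟫ + ‖v t‖ ^ 2) + γ₁ * (2 * ⟪r t, v t⟫)) + γ₂ * ψ t ≥ 0 := by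
    intro t ht
    have hc := hconstraint t ht
    have hru : ⟪r t, ui t - uj t⟫ = 2 * ⟪r t, ui t⟫ := by
      rw [hrecip t]
      rw [show ui t - -ui t = (2:ℝ) • ui t by module]
      rw [real_inner_smul_right]
    rw [hru]
    simp only [hψ, hh]
    nlinarith [hc]
  have hψpos := gronwall_nonneg ψ _ γ₂ hψd hψineq (by simpa [hψ, hh] using hψ1)
  have hhineq : ∀ t ∈ Set.Ici (0 : ℝ), 2 * ⟪r t, v t⟫ + γ₁ * h t ≥ 0 := fun t ht => hψpos t ht
  have hhpos := gronwall_nonneg h (fun t => 2 * ⟪r t, v t⟫) γ₁ hhd hhineq (by simpa [hh] using h0)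
  intro t ht
  have := hhpos t ht
  have hn : (0:ℝ) ≤ ‖r t‖ := norm_nonneg _
  simp only [hh] at this
  nlinarith
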